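/- Let K ⊆ [-1,1]^I be a compact space and D ⊆ K a subset. Suppose that for every ε > 0 there exists a countable decomposition I = ⋃_{n ∈ ω} Iₙ^ε such that for every x ∈ D and every n, the set {i ∈ Iₙ^ε : |x(i)| > ε} is finite. Then there exists a topological embedding Φ : K → [-1,1]^{I × ω} such that Φ(x) ∈ c₀(I × ω) for every x ∈ D. -/

import Mathlib

/-- Truncation at level ε. -/
private def trunc (ε t : ℝ) : ℝ := max (t - ε) 0 + min (t + ε) 0

private lemma trunc_apart {ε s t : ℝ} (hε : 0 ≤ ε) (h : trunc ε s = trunc ε t) : |s - t| ≤ 2 * ε := by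
  unfold trunc at h
  rw [abs_sub_le_iff]
  rcases max_cases (s - ε) 0 with ⟨h1, h1'⟩ | ⟨h1, h1'⟩ <;>
  rcases max_cases (t - ε) 0 with ⟨h2, h2'⟩ | ⟨h2, h2'⟩ <;>
  rcases min_cases (s + ε) 0 with ⟨h3, h3'⟩ | ⟨h3, h3'⟩ <;>
  rcases min_cases (t + ε) 0 with ⟨h4, h4'⟩ | ⟨h4, h4'⟩ <;>
  rw [h1, h3, h2, h4] at h <;> constructor <;> linarith

private lemma trunc_abs_le {ε t : ℝ} (hε : 0 ≤ ε) : |trunc ε t| ≤ |t| := by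
  unfold trunc
  have h5 := neg_abs_le t
  have h6 := le_abs_self t
  rw [abs_le]
  rcases max_cases (t - ε) 0 with ⟨h1, h1'⟩ | ⟨h1, h1'⟩ <;>
  rcases min_cases (t + ε) 0 with ⟨h3, h3'⟩ | ⟨h3, h3'⟩ <;>
  rw [h1, h3] <;> constructor <;> linarith

private lemma trunc_eq_zero {ε t : ℝ} (h : |t| ≤ ε) : trunc ε t = 0 := by
  rw [abs_le] at h
  unfold trunc
  rw [max_eq_right (by linarith), min_eq_right (by linarith)]
  ring

private lemma trunc_continuous (ε : ℝ) : Continuous (trunc ε) := by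
  unfold trunc
  fun_prop

/-- `c₀(J)`: functions all of whose values are small outside a finite set. -/
def c0Set (J : Type*) : Set (J → ℝ) :=
  {x | ∀ ε > 0, {j : J | ε < |x j|}.Finite}

theorem embedding_into_c0_of_decompositions
    {I : Type*} (K D : Set (I → ℝ))
    (hK : IsCompact K)
    (hKcube : ∀ x ∈ K, ∀ i, x i ∈ Set.Icc (-1 : ℝ) 1)
    (hDK : D ⊆ K)
    (hdec : ∀ ε > (0 : ℝ), ∃ In : ℕ → Set I,
      (⋃ n, In n) = Set.univ ∧
      ∀ x ∈ D, ∀ n, {i ∈ In n | ε < |x i|}.Finite) :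
    ∃ Φ : (I → ℝ) → (I × ℕ → ℝ),
      Topology.IsEmbedding (fun x : K => Φ x) ∧
      (∀ x ∈ K, ∀ p, Φ x p ∈ Set.Icc (-1 : ℝ) 1) ∧
      ∀ x ∈ D, Φ x ∈ c0Set (I × ℕ) := by
  classical
  -- choose decompositions for ε = 1/(n+1)
  choose In hcov hfin using fun n : ℕ => hdec (1 / (n + 1)) (by positivity)
  -- abbreviations
  set εn : ℕ → ℝ := fun n => 1 / (n + 1) with hεn
  have hεpos : ∀ n : ℕ, 0 < εn n := fun n => by positivity
  set c : ℕ → ℕ → ℝ := fun n m => 1 / ((n + 1) * (m + 1)) with hc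
  have hcpos : ∀ n m : ℕ, 0 < c n m := fun n m => by positivity
  have hcle1 : ∀ n m : ℕ, c n m ≤ 1 := by
    intro n m
    rw [hc]
    rw [div_le_one (by positivity)]
    nlinarith [Nat.cast_nonneg (α := ℝ) n, Nat.cast_nonneg (α := ℝ) m]
  -- the map
  set Φ : (I → ℝ) → (I × ℕ → ℝ) := fun x p =>
    if p.1 ∈ In p.2.unpair.1 p.2.unpair.2 then
      c p.2.unpair.1 p.2.unpair.2 * trunc (εn p.2.unpair.1) (x p.1)
    else 0 with hΦ
  refine ⟨Φ, ?_, ?_, ?_⟩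
  · -- embedding
    have : CompactSpace K := isCompact_iff_compactSpace.mp hK
    have hcont : Continuous (fun x : K => Φ x) := by
      apply continuous_pi
      intro p
      by_cases h : p.1 ∈ In p.2.unpair.1 p.2.unpair.2
      · simp only [hΦ, h, if_true]
        exact (continuous_const.mul ((trunc_continuous _).comp
          ((continuous_apply p.1).comp continuous_subtype_val)))
      · simp only [hΦ, h, if_false]
        exact continuous_const
    have hinj : Function.Injective (fun x : K => Φ x) := by
      intro x y hxy
      ext i
      by_contra hne
      have hδ : 0 < |(x : I → ℝ) i - (y : I → ℝ) i| := by
        simpa [sub_eq_zero] using abs_pos.mpr (sub_ne_zero.mpr hne)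
      set δ := |(x : I → ℝ) i - (y : I → ℝ) i|
      obtain ⟨n, hn⟩ := exists_nat_gt (2 / δ)
      have h2 : 2 < δ * n := by
        rw [div_lt_iff₀ hδ] at hn; linarith
      have hεδ : 2 * εn n < δ := by
        rw [hεn]
        rw [mul_div_assoc', div_lt_iff₀ (by positivity)]
        nlinarith [Nat.cast_nonneg (α := ℝ) n]
      obtain ⟨m, hm⟩ : ∃ m, i ∈ In n m := by
        have := (hcov n).symm ▸ Set.mem_univ i
        simpa [Set.mem_iUnion] using this
      have hcoord := congrFun hxy (i, Nat.pair n m)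
      simp only [hΦ, Nat.unpair_pair, hm, if_true] at hcoord
      have htr : trunc (εn n) ((x : I → ℝ) i) = trunc (εn n) ((y : I → ℝ) i) :=
        mul_left_cancel₀ (ne_of_gt (hcpos n m)) hcoord
      have := trunc_apart (le_of_lt (hεpos n)) htr
      linarith
    exact (hcont.isClosedEmbedding hinj).toIsEmbedding
  · -- bounds
    intro x hx p
    have hxi := hKcube x hx p.1
    have habs : |x p.1| ≤ 1 := abs_le.mpr ⟨hxi.1, hxi.2⟩
    rw [Set.mem_Icc, ← abs_le]
    simp only [hΦ]
    split_ifs with h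
    · rw [abs_mul, abs_of_pos (hcpos _ _)]
      calc c _ _ * |trunc (εn _) (x p.1)| ≤ 1 * |x p.1| :=
            mul_le_mul (hcle1 _ _) (trunc_abs_le (le_of_lt (hεpos _))) (abs_nonneg _)
              zero_le_one
        _ ≤ 1 := by rw [one_mul]; exact habs
    · simp
  · -- c₀
    intro x hx
    intro ε hε
    have habs : ∀ i, |x i| ≤ 1 := fun i => by
      have h := hKcube x (hDK hx) i
      exact abs_le.mpr ⟨h.1, h.2⟩
    obtain ⟨N, hN⟩ := exists_nat_gt (1 / ε)
    have key : ∀ p : I × ℕ, ε < |Φ x p| →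
        p.2.unpair.1 < N ∧ p.2.unpair.2 < N ∧
        p.1 ∈ In p.2.unpair.1 p.2.unpair.2 ∧ εn p.2.unpair.1 < |x p.1| := by
      intro p hp
      set n := p.2.unpair.1
      set m := p.2.unpair.2
      have hmem : p.1 ∈ In n m := by
        by_contra h
        have h' : p.1 ∉ In p.2.unpair.1 p.2.unpair.2 := h
        simp only [hΦ, h', if_false, abs_zero] at hp
        linarith
      have hmem' : p.1 ∈ In p.2.unpair.1 p.2.unpair.2 := hmem
      simp only [hΦ, hmem', if_true] at hp
      change ε < |c n m * trunc (εn n) (x p.1)| at hp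
      rw [abs_mul, abs_of_pos (hcpos n m)] at hp
      have hlt : ε < c n m := by
        have := trunc_abs_le (t := x p.1) (le_of_lt (hεpos n))
        nlinarith [habs p.1, abs_nonneg (trunc (εn n) (x p.1)), hcpos n m]
      have hnm : ((n : ℝ) + 1) * ((m : ℝ) + 1) < 1 / ε := by
        rw [hc] at hlt
        rw [lt_div_iff₀ hε]
        rw [lt_div_iff₀ (by positivity)] at hlt
        linarith
      have hn1 : (n : ℝ) + 1 < (N : ℝ) := by
        nlinarith [Nat.cast_nonneg (α := ℝ) n, Nat.cast_nonneg (α := ℝ) m]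
      have hm1 : (m : ℝ) + 1 < (N : ℝ) := by
        nlinarith [Nat.cast_nonneg (α := ℝ) n, Nat.cast_nonneg (α := ℝ) m]
      refine ⟨by exact_mod_cast lt_of_le_of_lt (by linarith : (n:ℝ) ≤ (n:ℝ)+1) hn1,
        by exact_mod_cast lt_of_le_of_lt (by linarith : (m:ℝ) ≤ (m:ℝ)+1) hm1, hmem, ?_⟩
      by_contra hle
      push_neg at hle
      rw [trunc_eq_zero hle, abs_zero, mul_zero] at hp
      linarith
    have hsub : {p : I × ℕ | ε < |Φ x p|} ⊆
        ⋃ (n : Fin N) (m : Fin N),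
          (fun i => (i, Nat.pair n m)) '' {i ∈ In n m | εn n < |x i|} := by
      intro p hp
      obtain ⟨hn, hm, hmem, hbig⟩ := key p hp
      simp only [Set.mem_iUnion]
      refine ⟨⟨p.2.unpair.1, hn⟩, ⟨p.2.unpair.2, hm⟩, ⟨p.1, ⟨hmem, hbig⟩, ?_⟩⟩
      simp [Nat.pair_unpair]
    exact Set.Finite.subset
      (Set.finite_iUnion fun n : Fin N =>
        Set.finite_iUnion fun m : Fin N => ((hfin n x hx m).image _)) hsub
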